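/- Let n ≥ 1, let H₁, H₂ be Hermitian n×n complex matrices, and let β > 0. Define Z_i = trace(exp(−β·H_i)) (a positive real number), the density matrix ρ₁ = exp(−β·H₁)/Z₁, and the free energies F_i = −β⁻¹·log(Re Z_i). Then F₂ ≤ F₁ + Re(trace(ρ₁·(H₂ − H₁))). -/

import Mathlib

open Matrix


lemma exp_hermitian_eq {n : ℕ} {B : Matrix (Fin n) (Fin n) ℂ} (hB : B.IsHermitian) :
    NormedSpace.exp B = (hB.eigenvectorUnitary : Matrix (Fin n) (Fin n) ℂ) *
      diagonal (fun j => (Real.exp (hB.eigenvalues j) : ℂ)) *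
      star (hB.eigenvectorUnitary : Matrix (Fin n) (Fin n) ℂ) := by
  have hU : star (hB.eigenvectorUnitary : Matrix (Fin n) (Fin n) ℂ)
      = (hB.eigenvectorUnitary : Matrix (Fin n) (Fin n) ℂ)⁻¹ :=
    (Matrix.inv_eq_left_inv (Matrix.UnitaryGroup.star_mul_self hB.eigenvectorUnitary)).symm
  conv_lhs => rw [hB.spectral_theorem, Unitary.conjStarAlgAut_apply, hU]
  rw [Matrix.exp_conj _ _ ((Matrix.isUnit_iff_isUnit_det _).mpr
      (Matrix.UnitaryGroup.det_isUnit hB.eigenvectorUnitary)), hU, Matrix.exp_diagonal]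
  congr 1
  congr 1
  rw [Pi.exp_def]
  funext j
  rw [← Complex.exp_eq_exp_ℂ]
  simp [Function.comp, Complex.ofReal_exp]

lemma diag_conj_entry {n : ℕ} (W : Matrix (Fin n) (Fin n) ℂ) (d : Fin n → ℝ) (i : Fin n) :
    ((W * diagonal (fun j => (d j : ℂ)) * star W) i i).re
      = ∑ j, Complex.normSq (W i j) * d j := by
  rw [Matrix.mul_apply]
  rw [Complex.re_sum]
  congr 1
  funext j
  rw [Matrix.mul_diagonal]
  have : (star W) j i = (starRingEnd ℂ) (W i j) := rfl
  rw [this]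
  have : W i j * (d j : ℂ) * (starRingEnd ℂ) (W i j)
      = (Complex.normSq (W i j) * d j : ℝ) := by
    push_cast
    rw [mul_comm (W i j) ((d j : ℂ)), mul_assoc, Complex.mul_conj]
    ring
  rw [this, Complex.ofReal_re]

lemma row_normSq_sum {n : ℕ} (W : Matrix.unitaryGroup (Fin n) ℂ) (i : Fin n) :
    ∑ j, Complex.normSq ((W : Matrix (Fin n) (Fin n) ℂ) i j) = 1 := by
  have h := (Matrix.mem_unitaryGroup_iff).mp W.2
  have h1 : (((W : Matrix (Fin n) (Fin n) ℂ) * star (W : Matrix (Fin n) (Fin n) ℂ)) i i).re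
      = (1 : ℝ) := by rw [h]; simp [Matrix.one_apply]
  rw [Matrix.mul_apply, Complex.re_sum] at h1
  rw [← h1]
  congr 1
  funext j
  have : (star (W : Matrix (Fin n) (Fin n) ℂ)) j i
      = (starRingEnd ℂ) ((W : Matrix (Fin n) (Fin n) ℂ) i j) := rfl
  rw [this, Complex.mul_conj, Complex.ofReal_re]

lemma peierls_entry {n : ℕ} {B : Matrix (Fin n) (Fin n) ℂ} (hB : B.IsHermitian)
    (U : Matrix.unitaryGroup (Fin n) ℂ) (i : Fin n) :
    Real.exp (((star (U : Matrix (Fin n) (Fin n) ℂ) * B * U) i i).re)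
      ≤ ((star (U : Matrix (Fin n) (Fin n) ℂ) * NormedSpace.exp B * U) i i).re := by
  set V := hB.eigenvectorUnitary with hV
  set W : Matrix.unitaryGroup (Fin n) ℂ := U⁻¹ * V with hW
  have hWc : (W : Matrix (Fin n) (Fin n) ℂ)
      = star (U : Matrix (Fin n) (Fin n) ℂ) * (V : Matrix (Fin n) (Fin n) ℂ) := rfl
  have hWs : star (W : Matrix (Fin n) (Fin n) ℂ)
      = star (V : Matrix (Fin n) (Fin n) ℂ) * (U : Matrix (Fin n) (Fin n) ℂ) := by
    rw [hWc, StarMul.star_mul, star_star]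
  have hBeq : star (U : Matrix (Fin n) (Fin n) ℂ) * B * U
      = (W : Matrix (Fin n) (Fin n) ℂ) * diagonal (fun j => ((hB.eigenvalues j : ℝ) : ℂ))
        * star (W : Matrix (Fin n) (Fin n) ℂ) := by
    conv_lhs => rw [hB.spectral_theorem, Unitary.conjStarAlgAut_apply]
    have : diagonal (RCLike.ofReal ∘ hB.eigenvalues)
        = diagonal (fun j => ((hB.eigenvalues j : ℝ) : ℂ)) := rfl
    rw [this, hWc, StarMul.star_mul, star_star]
    noncomm_ring
  have hEeq : star (U : Matrix (Fin n) (Fin n) ℂ) * NormedSpace.exp B * U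
      = (W : Matrix (Fin n) (Fin n) ℂ)
        * diagonal (fun j => ((Real.exp (hB.eigenvalues j) : ℝ) : ℂ))
        * star (W : Matrix (Fin n) (Fin n) ℂ) := by
    rw [exp_hermitian_eq hB, hWc, StarMul.star_mul, star_star]
    noncomm_ring
  rw [hBeq, hEeq, diag_conj_entry, diag_conj_entry]
  have := convexOn_exp.map_sum_le (t := Finset.univ)
    (w := fun j => Complex.normSq ((W : Matrix (Fin n) (Fin n) ℂ) i j))
    (p := fun j => hB.eigenvalues j)
    (fun j _ => Complex.normSq_nonneg _) (row_normSq_sum W i)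
    (fun j _ => Set.mem_univ _)
  simpa [smul_eq_mul] using this

/-- Quantum Gibbs–Bogoliubov (Peierls–Bogoliubov) inequality for Hermitian matrices:
with `Z_i = trace (exp (−β • H_i))`, `ρ₁ = Z₁⁻¹ • exp (−β • H₁)` and
`F_i = −β⁻¹ * log (Re Z_i)`, one has `F₂ ≤ F₁ + Re (trace (ρ₁ * (H₂ − H₁)))`. -/
theorem quantum_gibbs_bogoliubov
    {n : ℕ} (hn : 1 ≤ n) (H₁ H₂ : Matrix (Fin n) (Fin n) ℂ)
    (h₁ : H₁.IsHermitian) (h₂ : H₂.IsHermitian) (β : ℝ) (hβ : 0 < β) :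
    let Z₁ : ℂ := (NormedSpace.exp ((-(β : ℂ)) • H₁)).trace;
    let Z₂ : ℂ := (NormedSpace.exp ((-(β : ℂ)) • H₂)).trace;
    let ρ₁ : Matrix (Fin n) (Fin n) ℂ := Z₁⁻¹ • NormedSpace.exp ((-(β : ℂ)) • H₁);
    -β⁻¹ * Real.log Z₂.re ≤ -β⁻¹ * Real.log Z₁.re + ((ρ₁ * (H₂ - H₁)).trace).re := by
  intro Z₁ Z₂ ρ₁
  haveI : Nonempty (Fin n) := Fin.pos_iff_nonempty.mp hn
  have hsmul : ∀ (H : Matrix (Fin n) (Fin n) ℂ), H.IsHermitian →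
      ((-(β : ℂ)) • H).IsHermitian := by
    intro H h
    rw [Matrix.IsHermitian, Matrix.conjTranspose_smul, h]
    congr 1
    simp [Complex.star_def]
  set A : Matrix (Fin n) (Fin n) ℂ := (-(β : ℂ)) • H₁ with hAdef
  set B : Matrix (Fin n) (Fin n) ℂ := (-(β : ℂ)) • H₂ with hBdef
  have hA : A.IsHermitian := hsmul H₁ h₁
  have hB : B.IsHermitian := hsmul H₂ h₂
  set U := hA.eigenvectorUnitary with hUdef
  set Uc : Matrix (Fin n) (Fin n) ℂ := (U : Matrix (Fin n) (Fin n) ℂ) with hUcdef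
  set a : Fin n → ℝ := hA.eigenvalues with hadef
  have hU1 : Uc * star Uc = 1 := Matrix.mem_unitaryGroup_iff.mp U.2
  have hU1' : star Uc * Uc = 1 := Matrix.mem_unitaryGroup_iff'.mp U.2
  -- trace conjugation invariance
  have traceconj : ∀ M : Matrix (Fin n) (Fin n) ℂ,
      (star Uc * M * Uc).trace = M.trace := by
    intro M
    rw [Matrix.trace_mul_cycle, hU1, one_mul]
  -- Z₁ is real
  have hZ1 : Z₁ = ((∑ i, Real.exp (a i) : ℝ) : ℂ) := by
    show (NormedSpace.exp A).trace = _
    rw [exp_hermitian_eq hA, Matrix.trace_mul_cycle, ← hUcdef, hU1', one_mul,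
      Matrix.trace_diagonal]
    push_cast
    rfl
  have hZ1re : Z₁.re = ∑ i, Real.exp (a i) := by rw [hZ1, Complex.ofReal_re]
  set Zr : ℝ := ∑ i, Real.exp (a i) with hZrdef
  have hZrpos : 0 < Zr := Finset.sum_pos (fun i _ => Real.exp_pos _) Finset.univ_nonempty
  -- diag entries
  set g : Fin n → ℝ := fun i => ((star Uc * H₂ * Uc) i i).re with hgdef
  set hh : Fin n → ℝ := fun i => ((star Uc * H₁ * Uc) i i).re with hhdef
  set b : Fin n → ℝ := fun i => ((star Uc * B * Uc) i i).re with hbdef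
  have hdiagA : star Uc * A * Uc = diagonal (fun i => ((a i : ℝ) : ℂ)) :=
    by have := hA.conjStarAlgAut_star_eigenvectorUnitary; rwa [Unitary.conjStarAlgAut_star_apply] at this
  have hbg : ∀ i, b i = -β * g i := by
    intro i
    have : star Uc * B * Uc = (-(β : ℂ)) • (star Uc * H₂ * Uc) := by
      rw [hBdef, Matrix.mul_smul, Matrix.smul_mul]
    simp only [hbdef, this, Matrix.smul_apply, smul_eq_mul]
    have : (-(β : ℂ)) = ((-β : ℝ) : ℂ) := by push_cast; ring
    rw [this, Complex.re_ofReal_mul]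
  have hah : ∀ i, a i = -β * hh i := by
    intro i
    have e1 : star Uc * A * Uc = (-(β : ℂ)) • (star Uc * H₁ * Uc) := by
      rw [hAdef, Matrix.mul_smul, Matrix.smul_mul]
    have e2 : ((star Uc * A * Uc) i i).re = a i := by
      rw [hdiagA]; simp [Matrix.diagonal_apply_eq]
    rw [← e2, e1]
    simp only [Matrix.smul_apply, smul_eq_mul]
    have : (-(β : ℂ)) = ((-β : ℝ) : ℂ) := by push_cast; ring
    rw [this, Complex.re_ofReal_mul]
  -- Peierls bound on Z₂
  have hZ2ge : ∑ i, Real.exp (b i) ≤ Z₂.re := by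
    have e : Z₂ = (star Uc * NormedSpace.exp B * Uc).trace := (traceconj _).symm
    rw [e, Matrix.trace, Complex.re_sum]
    exact Finset.sum_le_sum fun i _ => peierls_entry hB U i
  have hZ2pos : 0 < Z₂.re :=
    lt_of_lt_of_le (Finset.sum_pos (fun i _ => Real.exp_pos _) Finset.univ_nonempty) hZ2ge
  -- compute the perturbation trace
  set c : Fin n → ℝ := fun i => g i - hh i with hcdef
  set T : ℝ := ((ρ₁ * (H₂ - H₁)).trace).re with hTdef
  have hMsub : star Uc * (H₂ - H₁) * Uc = star Uc * H₂ * Uc - star Uc * H₁ * Uc := by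
    rw [Matrix.mul_sub, Matrix.sub_mul]
  have hMre : ∀ i, ((star Uc * (H₂ - H₁) * Uc) i i).re = c i := by
    intro i
    rw [hMsub]
    simp [hcdef, hgdef, hhdef, Matrix.sub_apply]
  have hexpAC : (NormedSpace.exp A * (H₂ - H₁)).trace
      = ∑ i, (star Uc * (H₂ - H₁) * Uc) i i * (Real.exp (a i) : ℂ) := by
    rw [exp_hermitian_eq hA, ← hUcdef, ← hadef]
    rw [mul_assoc (Uc * diagonal fun j => (Real.exp (a j) : ℂ)) (star Uc) (H₂ - H₁)]
    rw [Matrix.trace_mul_comm, ← mul_assoc]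
    simp [Matrix.trace, Matrix.diag, Matrix.mul_diagonal]
  have hρtr : (ρ₁ * (H₂ - H₁)).trace
      = ((Zr⁻¹ : ℝ) : ℂ) * ∑ i, (star Uc * (H₂ - H₁) * Uc) i i * (Real.exp (a i) : ℂ) := by
    show ((Z₁⁻¹ • NormedSpace.exp A) * (H₂ - H₁)).trace = _
    rw [Matrix.smul_mul, Matrix.trace_smul, smul_eq_mul, hexpAC, hZ1, Complex.ofReal_inv]
  have hT : T = Zr⁻¹ * ∑ i, Real.exp (a i) * c i := by
    rw [hTdef, hρtr, Complex.re_ofReal_mul, Complex.re_sum]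
    congr 1
    apply Finset.sum_congr rfl
    intro i _
    rw [mul_comm ((star Uc * (H₂ - H₁) * Uc) i i), Complex.re_ofReal_mul, hMre i]
  -- Jensen step
  have hxsum : ∑ i, (Real.exp (a i) / Zr) * (-β * c i) = -β * T := by
    rw [hT, ← mul_assoc, Finset.mul_sum]
    apply Finset.sum_congr rfl
    intro i _
    simp only [div_eq_mul_inv]
    ring
  have hjensen : Real.exp (-β * T) ≤ Zr⁻¹ * ∑ i, Real.exp (b i) := by
    have hba : ∀ i, a i + -β * c i = b i := by
      intro i
      rw [hbg i, hah i]
      simp only [hcdef]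
      ring
    have hwsum : ∑ i, Real.exp (a i) / Zr = 1 := by
      rw [← Finset.sum_div, ← hZrdef, div_self hZrpos.ne']
    have hj := convexOn_exp.map_sum_le (t := Finset.univ)
      (w := fun i => Real.exp (a i) / Zr) (p := fun i => -β * c i)
      (fun i _ => div_nonneg (Real.exp_pos _).le hZrpos.le) hwsum (fun i _ => Set.mem_univ _)
    simp only [smul_eq_mul] at hj
    rw [hxsum] at hj
    refine hj.trans (le_of_eq ?_)
    rw [Finset.mul_sum]
    apply Finset.sum_congr rfl
    intro i _
    rw [← hba i, Real.exp_add, div_eq_mul_inv]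
    ring
  -- conclude
  have hmain : Zr * Real.exp (-β * T) ≤ Z₂.re := by
    calc Zr * Real.exp (-β * T) ≤ Zr * (Zr⁻¹ * ∑ i, Real.exp (b i)) :=
          mul_le_mul_of_nonneg_left hjensen hZrpos.le
    _ = ∑ i, Real.exp (b i) := by
          rw [← mul_assoc, mul_inv_cancel₀ hZrpos.ne', one_mul]
    _ ≤ Z₂.re := hZ2ge
  have hlog : Real.log Zr + (-β * T) ≤ Real.log Z₂.re := by
    have := Real.log_le_log (mul_pos hZrpos (Real.exp_pos _)) hmain
    rwa [Real.log_mul hZrpos.ne' (Real.exp_pos _).ne', Real.log_exp] at this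
  rw [hZ1re]
  have h5 := mul_le_mul_of_nonneg_left hlog (inv_nonneg.mpr hβ.le)
  have h6 : β⁻¹ * (Real.log Zr + -β * T) = β⁻¹ * Real.log Zr - T := by
    have h7 : β⁻¹ * (-β * T) = -T := by
      rw [show β⁻¹ * (-β * T) = -(β⁻¹ * β) * T by ring, inv_mul_cancel₀ hβ.ne']
      ring
    rw [mul_add, h7]
    ring
  rw [h6] at h5
  linarith
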